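/- Let Q be an idempotent in M_m(ℂ) with ‖Q‖ ≤ k (operator norm). Then Q is unitarily equivalent to a block matrix of the form [[I, R], [0, 0]] with ‖R‖ ≤ k, and hence there exists an invertible matrix X with ‖X‖ ≤ 1 + k and ‖X⁻¹‖ ≤ 1 + k such that XQX⁻¹ is a self-adjoint projection. -/

import Mathlib

open scoped Matrix.Norms.L2Operator
open Matrix

section helpers
set_option linter.unusedSectionVars false

variable {p q m n : Type*} [Fintype p] [Fintype q] [Fintype m] [Fintype n]
  [DecidableEq p] [DecidableEq q] [DecidableEq m] [DecidableEq n]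

lemma myNormOneLe : ‖(1 : Matrix p p ℂ)‖ ≤ 1 := by
  rw [Matrix.cstar_norm_def, _root_.map_one, ContinuousLinearMap.one_def]
  exact ContinuousLinearMap.norm_id_le

lemma myNormLeOne₁ (A : Matrix p q ℂ) (h : Aᴴ * A = 1) : ‖A‖ ≤ 1 := by
  have h1 := Matrix.l2_opNorm_conjTranspose_mul_self A
  rw [h] at h1
  have h2 : ‖(1 : Matrix q q ℂ)‖ ≤ 1 := myNormOneLe
  nlinarith [norm_nonneg A]

lemma myNormLeOne₂ (A : Matrix p q ℂ) (h : A * Aᴴ = 1) : ‖A‖ ≤ 1 := by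
  rw [← Matrix.l2_opNorm_conjTranspose A]
  exact myNormLeOne₁ Aᴴ (by rwa [conjTranspose_conjTranspose])

lemma myOneSubMul (A : Matrix m n ℂ) (e : p → m) :
    (1 : Matrix m m ℂ).submatrix e _root_.id * A = A.submatrix e _root_.id := by
  ext i j
  simp [Matrix.mul_apply, Matrix.one_apply, ite_mul, Finset.sum_ite_eq]

lemma myMulOneSub (A : Matrix m n ℂ) (f : q → n) :
    A * (1 : Matrix n n ℂ).submatrix _root_.id f = A.submatrix _root_.id f := by
  ext i j
  simp [Matrix.mul_apply, Matrix.one_apply, mul_ite, Finset.sum_ite_eq']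


lemma myNorm_mul_mul_le (A : Matrix p m ℂ) (B : Matrix m n ℂ) (C : Matrix n q ℂ)
    (ha : ‖A‖ ≤ 1) (hc : ‖C‖ ≤ 1) : ‖A * B * C‖ ≤ ‖B‖ := by
  have h1 := Matrix.l2_opNorm_mul (A * B) C
  have h2 := Matrix.l2_opNorm_mul A B
  have n1 : (0:ℝ) ≤ ‖A * B‖ := norm_nonneg _
  have n2 : (0:ℝ) ≤ ‖B‖ := norm_nonneg _
  have n3 : (0:ℝ) ≤ ‖C‖ := norm_nonneg _
  have n4 : (0:ℝ) ≤ ‖A‖ := norm_nonneg _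
  nlinarith

lemma submatrix_eq_mul_mul (A : Matrix m n ℂ) (e : p → m) (f : q → n) :
    A.submatrix e f =
      (1 : Matrix m m ℂ).submatrix e _root_.id * A * (1 : Matrix n n ℂ).submatrix _root_.id f := by
  rw [myOneSubMul, myMulOneSub, Matrix.submatrix_submatrix]
  rfl

lemma myNorm_submatrix_le (A : Matrix m n ℂ) (e : p → m) (f : q → n)
    (he : Function.Injective e) (hf : Function.Injective f) :
    ‖A.submatrix e f‖ ≤ ‖A‖ := by
  have hE : ‖(1 : Matrix m m ℂ).submatrix e _root_.id‖ ≤ 1 := by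
    refine myNormLeOne₂ _ ?_
    rw [Matrix.conjTranspose_submatrix, Matrix.conjTranspose_one]
    ext i j
    simp [Matrix.mul_apply, Matrix.one_apply, ite_mul, Finset.sum_ite_eq, he.eq_iff]
  have hF : ‖(1 : Matrix n n ℂ).submatrix _root_.id f‖ ≤ 1 := by
    refine myNormLeOne₁ _ ?_
    rw [Matrix.conjTranspose_submatrix, Matrix.conjTranspose_one]
    ext i j
    simp [Matrix.mul_apply, Matrix.one_apply, mul_ite, Finset.sum_ite_eq', hf.eq_iff]
  rw [submatrix_eq_mul_mul A e f]
  exact myNorm_mul_mul_le _ _ _ hE hF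

lemma myNorm_submatrix_equiv (A : Matrix m n ℂ) (e : p ≃ m) (f : q ≃ n) :
    ‖A.submatrix ⇑e ⇑f‖ = ‖A‖ := by
  refine le_antisymm (myNorm_submatrix_le A e f e.injective f.injective) ?_
  have := myNorm_submatrix_le (A.submatrix ⇑e ⇑f) e.symm f.symm e.symm.injective f.symm.injective
  simpa using this

lemma myNorm_toBlocks₁₂_le (M : Matrix (p ⊕ q) (m ⊕ n) ℂ) : ‖M.toBlocks₁₂‖ ≤ ‖M‖ := by
  have h : M.toBlocks₁₂ = M.submatrix Sum.inl Sum.inr := by ext i j; rfl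
  rw [h]
  exact myNorm_submatrix_le M _ _ Sum.inl_injective Sum.inr_injective

lemma myNorm_fromBlocks_le (R : Matrix p n ℂ) :
    ‖(Matrix.fromBlocks 0 R 0 0 : Matrix (p ⊕ q) (m ⊕ n) ℂ)‖ ≤ ‖R‖ := by
  have key : (Matrix.fromBlocks 0 R 0 0 : Matrix (p ⊕ q) (m ⊕ n) ℂ) =
      (1 : Matrix (p ⊕ q) (p ⊕ q) ℂ).submatrix _root_.id Sum.inl * R *
        (1 : Matrix (m ⊕ n) (m ⊕ n) ℂ).submatrix Sum.inr _root_.id := by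
    ext (i | i) (j | j) <;>
      simp [Matrix.mul_apply, Matrix.one_apply, mul_ite, ite_mul,
        Finset.sum_ite_eq, Finset.sum_ite_eq']
  have hG : ‖(1 : Matrix (p ⊕ q) (p ⊕ q) ℂ).submatrix _root_.id (Sum.inl : p → p ⊕ q)‖ ≤ 1 := by
    refine myNormLeOne₁ _ ?_
    rw [Matrix.conjTranspose_submatrix, Matrix.conjTranspose_one]
    ext i j
    simp [Matrix.mul_apply, Matrix.one_apply, ite_mul, Finset.sum_ite_eq, Sum.inl_injective.eq_iff]
  have hK : ‖(1 : Matrix (m ⊕ n) (m ⊕ n) ℂ).submatrix (Sum.inr : n → m ⊕ n) _root_.id‖ ≤ 1 := by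
    refine myNormLeOne₂ _ ?_
    rw [Matrix.conjTranspose_submatrix, Matrix.conjTranspose_one]
    ext i j
    simp [Matrix.mul_apply, Matrix.one_apply, mul_ite, Finset.sum_ite_eq', Sum.inr_injective.eq_iff]
  rw [key]
  exact myNorm_mul_mul_le _ _ _ hG hK

noncomputable def myCLM (m : ℕ) :
    Matrix (Fin m) (Fin m) ℂ ≃⋆ₐ[ℂ]
      (EuclideanSpace ℂ (Fin m) →L[ℂ] EuclideanSpace ℂ (Fin m)) :=
  Matrix.toEuclideanCLM (𝕜 := ℂ) (n := Fin m)

lemma myExistsProj (m : ℕ) (Q : Matrix (Fin m) (Fin m) ℂ) (hQ : Q * Q = Q) :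
    ∃ P : Matrix (Fin m) (Fin m) ℂ, P * P = P ∧ star P = P ∧ P * Q = Q ∧ Q * P = P := by
  set T : EuclideanSpace ℂ (Fin m) →L[ℂ] EuclideanSpace ℂ (Fin m) := myCLM m Q with hT
  have hTT : T * T = T := by
    rw [hT, ← _root_.map_mul, hQ]
  set V : Submodule ℂ (EuclideanSpace ℂ (Fin m)) :=
    LinearMap.range (T : EuclideanSpace ℂ (Fin m) →ₗ[ℂ] EuclideanSpace ℂ (Fin m)) with hV
  set Pc : EuclideanSpace ℂ (Fin m) →L[ℂ] EuclideanSpace ℂ (Fin m) :=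
    V.subtypeL.comp (V.orthogonalProjectionOnto) with hPc
  have hPc_mem : ∀ x, Pc x ∈ V := fun x => (V.orthogonalProjectionOnto x).2
  have hPc_fix : ∀ x ∈ V, Pc x = x := by
    intro x hx
    show V.starProjection x = x
    exact Submodule.starProjection_eq_self_iff.mpr hx
  have hT_fix : ∀ x ∈ V, T x = x := by
    rintro x ⟨y, rfl⟩
    calc T (T y) = (T * T) y := rfl
    _ = T y := by rw [hTT]
  have inj : ∀ A B : Matrix (Fin m) (Fin m) ℂ, myCLM m A = myCLM m B → A = B := by
    intro A B h
    simpa using congrArg (myCLM m).symm h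
  have hPm : myCLM m ((myCLM m).symm Pc) = Pc := (myCLM m).apply_symm_apply Pc
  refine ⟨(myCLM m).symm Pc, ?_, ?_, ?_, ?_⟩
  · refine inj _ _ ?_
    rw [_root_.map_mul, hPm]
    refine ContinuousLinearMap.ext fun x => ?_
    show Pc (Pc x) = Pc x
    exact hPc_fix _ (hPc_mem x)
  · refine inj _ _ ?_
    rw [map_star, hPm]
    exact isSelfAdjoint_starProjection V
  · refine inj _ _ ?_
    rw [_root_.map_mul, hPm, ← hT]
    refine ContinuousLinearMap.ext fun x => ?_
    show Pc (T x) = T x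
    exact hPc_fix _ ⟨x, rfl⟩
  · refine inj _ _ ?_
    rw [_root_.map_mul, hPm, ← hT]
    refine ContinuousLinearMap.ext fun x => ?_
    show T (Pc x) = Pc x
    exact hT_fix _ (hPc_mem x)

lemma mySubMul {p q r s : Type*} [Fintype q] (A : Matrix p q ℂ) (B : Matrix q r ℂ) (e : s → p) :
    A.submatrix e _root_.id * B = (A * B).submatrix e _root_.id := by
  ext i j; simp [Matrix.mul_apply]

lemma myMulSub {p q r s : Type*} [Fintype q] (A : Matrix p q ℂ) (B : Matrix q r ℂ) (f : s → r) :
    A * B.submatrix _root_.id f = (A * B).submatrix _root_.id f := by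
  ext i j; simp [Matrix.mul_apply]

end helpers

set_option maxHeartbeats 1000000 in
theorem stmt10 (m : ℕ) (k : ℝ) (Q : Matrix (Fin m) (Fin m) ℂ)
    (hQ : Q * Q = Q) (hQk : ‖Q‖ ≤ k) :
    (∃ r : ℕ, ∃ hr : r ≤ m, ∃ U ∈ Matrix.unitaryGroup (Fin m) ℂ,
      ∃ R : Matrix (Fin r) (Fin (m - r)) ℂ, ‖R‖ ≤ k ∧
        U * Q * star U =
          Matrix.reindex (finSumFinEquiv.trans (finCongr (by omega)))
            (finSumFinEquiv.trans (finCongr (by omega)))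
            (Matrix.fromBlocks (1 : Matrix (Fin r) (Fin r) ℂ) R 0
              (0 : Matrix (Fin (m - r)) (Fin (m - r)) ℂ))) ∧
    (∃ X : (Matrix (Fin m) (Fin m) ℂ)ˣ,
      ‖(X : Matrix (Fin m) (Fin m) ℂ)‖ ≤ 1 + k ∧
      ‖(↑X⁻¹ : Matrix (Fin m) (Fin m) ℂ)‖ ≤ 1 + k ∧
      ((X : Matrix (Fin m) (Fin m) ℂ) * Q * (↑X⁻¹ : Matrix (Fin m) (Fin m) ℂ)) *
          ((X : Matrix (Fin m) (Fin m) ℂ) * Q * (↑X⁻¹ : Matrix (Fin m) (Fin m) ℂ)) =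
          (X : Matrix (Fin m) (Fin m) ℂ) * Q * (↑X⁻¹ : Matrix (Fin m) (Fin m) ℂ) ∧
      star ((X : Matrix (Fin m) (Fin m) ℂ) * Q * (↑X⁻¹ : Matrix (Fin m) (Fin m) ℂ)) =
          (X : Matrix (Fin m) (Fin m) ℂ) * Q * (↑X⁻¹ : Matrix (Fin m) (Fin m) ℂ)) := by
  classical
  have hk0 : (0:ℝ) ≤ k := le_trans (norm_nonneg Q) hQk
  obtain ⟨P, hPP, hPst, hPQ, hQP⟩ := myExistsProj m Q hQ
  have hP : P.IsHermitian := by rwa [Matrix.star_eq_conjTranspose] at hPst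
  set W : Matrix (Fin m) (Fin m) ℂ :=
    star (hP.eigenvectorUnitary : Matrix (Fin m) (Fin m) ℂ) with hWdef
  have hW1 : W * star W = 1 := by
    rw [hWdef, star_star]; exact Unitary.coe_star_mul_self hP.eigenvectorUnitary
  have hW2 : star W * W = 1 := by
    rw [hWdef, star_star]; exact Unitary.coe_mul_star_self hP.eigenvectorUnitary
  set d : Fin m → ℂ := RCLike.ofReal ∘ hP.eigenvalues with hd
  have hD : W * P * star W = Matrix.diagonal d := by
    rw [hWdef, star_star, hd]; simpa using hP.conjStarAlgAut_star_eigenvectorUnitary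
  have hconj : ∀ A B : Matrix (Fin m) (Fin m) ℂ,
      (W * A * star W) * (W * B * star W) = W * (A * B) * star W := by
    intro A B
    calc (W * A * star W) * (W * B * star W)
        = W * A * (star W * W) * B * star W := by simp only [mul_assoc]
      _ = W * (A * B) * star W := by rw [hW2, mul_one]; simp only [mul_assoc]
  -- eigenvalues are 0 or 1
  have hd01 : ∀ i, hP.eigenvalues i = 0 ∨ hP.eigenvalues i = 1 := by
    intro i
    have hDD : Matrix.diagonal d * Matrix.diagonal d = Matrix.diagonal d := by
      rw [← hD, hconj P P, hPP]
    rw [Matrix.diagonal_mul_diagonal] at hDD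
    have h := congrFun (congrFun hDD i) i
    simp only [Matrix.diagonal_apply_eq, Pi.mul_apply, hd, Function.comp_apply] at h
    have h2 : hP.eigenvalues i * hP.eigenvalues i = hP.eigenvalues i := by
      exact_mod_cast h
    have h3 : hP.eigenvalues i * (hP.eigenvalues i - 1) = 0 := by linear_combination h2
    rcases mul_eq_zero.mp h3 with h4 | h4
    · exact Or.inl h4
    · exact Or.inr (by linarith)
  -- the index equivalence
  set t : Finset (Fin m) := Finset.univ.filter (fun i => hP.eigenvalues i = 1) with ht
  set r : ℕ := t.card with hrdef
  have hr : r ≤ m := le_trans (Finset.card_le_univ t) (by simp)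
  have hcard2 : Fintype.card {x : Fin m // ¬ (x ∈ t)} = m - r := by
    rw [Fintype.card_subtype_compl]
    simp [hrdef]
  set e₂ : {x : Fin m // ¬ (x ∈ t)} ≃ Fin (m - r) := Fintype.equivFinOfCardEq hcard2 with he₂
  set e₁ : {x : Fin m // x ∈ t} ≃ Fin r := t.equivFin with he₁
  set e : Fin m ≃ (Fin r ⊕ Fin (m - r)) :=
    (Equiv.sumCompl (· ∈ t)).symm.trans (Equiv.sumCongr e₁ e₂) with he
  have hesymm_inl : ∀ i : Fin r, e.symm (Sum.inl i) = ↑(e₁.symm i) := by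
    intro i; simp [he]
  have hesymm_inr : ∀ j : Fin (m - r), e.symm (Sum.inr j) = ↑(e₂.symm j) := by
    intro j; simp [he]
  have h1 : ∀ i : Fin r, hP.eigenvalues (e.symm (Sum.inl i)) = 1 := by
    intro i
    rw [hesymm_inl]
    have h := (e₁.symm i).2
    have h' : ↑(e₁.symm i) ∈ Finset.univ.filter (fun i => hP.eigenvalues i = 1) := h
    exact (Finset.mem_filter.mp h').2
  have h2 : ∀ j : Fin (m - r), hP.eigenvalues (e.symm (Sum.inr j)) = 0 := by
    intro j
    rw [hesymm_inr]
    have hnot := (e₂.symm j).2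
    rcases hd01 ↑(e₂.symm j) with h | h
    · exact h
    · exact absurd (show ↑(e₂.symm j) ∈ t from
        Finset.mem_filter.mpr ⟨Finset.mem_univ _, h⟩) hnot
  -- the diagonal in block form
  have hDm : (Matrix.diagonal d).submatrix ⇑e.symm ⇑e.symm =
      Matrix.fromBlocks (1 : Matrix (Fin r) (Fin r) ℂ) 0 0
        (0 : Matrix (Fin (m - r)) (Fin (m - r)) ℂ) := by
    ext a b
    rcases a with i | i <;> rcases b with j | j <;>
      simp [Matrix.diagonal_apply, EmbeddingLike.apply_eq_iff_eq, Matrix.one_apply,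
        hd, h1, h2]
  set N : Matrix (Fin m) (Fin m) ℂ := W * Q * star W with hN
  set M : Matrix (Fin r ⊕ Fin (m - r)) (Fin r ⊕ Fin (m - r)) ℂ :=
    N.submatrix ⇑e.symm ⇑e.symm with hM
  have hdN : Matrix.diagonal d * N = N := by rw [← hD, hN, hconj P Q, hPQ]
  have hNd : N * Matrix.diagonal d = W * P * star W := by rw [hN, ← hD, hconj Q P, hQP]
  have key1 : Matrix.fromBlocks 1 0 0 0 * M = M := by
    rw [← hDm, hM, Matrix.submatrix_mul_equiv, hdN]
  have key2 : M * Matrix.fromBlocks 1 0 0 0 = Matrix.fromBlocks 1 0 0 0 := by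
    rw [← hDm, hM, Matrix.submatrix_mul_equiv, hNd, hD]
  set R : Matrix (Fin r) (Fin (m - r)) ℂ := M.toBlocks₁₂ with hR
  have hMblocks : M = Matrix.fromBlocks M.toBlocks₁₁ M.toBlocks₁₂ M.toBlocks₂₁ M.toBlocks₂₂ :=
    (Matrix.fromBlocks_toBlocks M).symm
  have hMeq : M = Matrix.fromBlocks 1 R 0 0 := by
    rw [hMblocks] at key1 key2
    rw [Matrix.fromBlocks_multiply] at key1 key2
    simp only [Matrix.one_mul, Matrix.zero_mul, Matrix.mul_one, Matrix.mul_zero,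
      add_zero, zero_add, one_mul, zero_mul, mul_one, mul_zero] at key1 key2
    have hC : (0 : Matrix (Fin (m - r)) (Fin r) ℂ) = M.toBlocks₂₁ := by
      simpa using congrArg Matrix.toBlocks₂₁ key1
    have hDd : (0 : Matrix (Fin (m - r)) (Fin (m - r)) ℂ) = M.toBlocks₂₂ := by
      simpa using congrArg Matrix.toBlocks₂₂ key1
    have hA : M.toBlocks₁₁ = 1 := by
      simpa using congrArg Matrix.toBlocks₁₁ key2
    rw [hMblocks, hA, ← hC, ← hDd]
  -- the unitary
  set ee : (Fin r ⊕ Fin (m - r)) ≃ Fin m :=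
    finSumFinEquiv.trans (finCongr (by omega)) with hee
  set c : Fin m ≃ Fin m := ee.symm.trans e.symm with hc
  set U : Matrix (Fin m) (Fin m) ℂ := W.submatrix ⇑c _root_.id with hU
  have hstarU : star U = (star W).submatrix _root_.id ⇑c := by
    rw [hU, Matrix.star_eq_conjTranspose, Matrix.star_eq_conjTranspose,
      Matrix.conjTranspose_submatrix]
  have hU1 : U * star U = 1 := by
    rw [hU, hstarU, myMulSub, mySubMul, hW1, Matrix.submatrix_submatrix]
    simpa using Matrix.submatrix_one_equiv c
  have hU2 : star U * U = 1 := by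
    rw [hU, hstarU, Matrix.submatrix_mul_equiv, hW2]
    rfl
  have hUmem : U ∈ Matrix.unitaryGroup (Fin m) ℂ := Matrix.mem_unitaryGroup_iff.mpr hU1
  -- the conjugation identity
  have hNsub : N = (Matrix.fromBlocks 1 R 0 0).submatrix ⇑e ⇑e := by
    have h := congrArg (fun X => X.submatrix ⇑e ⇑e) hMeq
    simp only [hM, Matrix.submatrix_submatrix] at h
    have h' : N.submatrix (fun x => x) (fun x => x) = (Matrix.fromBlocks 1 R 0 0).submatrix ⇑e ⇑e := by simpa [Function.comp_def] using h
    exact h'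
  have hcomp : (⇑e ∘ ⇑c) = ⇑ee.symm := by
    funext x; simp [hc]
  have hUQ : U * Q * star U = (Matrix.fromBlocks 1 R 0 0).submatrix ⇑ee.symm ⇑ee.symm := by
    rw [hU, hstarU, mySubMul, myMulSub, mySubMul, Matrix.submatrix_submatrix, ← hN, hNsub,
      Matrix.submatrix_submatrix]
    have hfun1 : (⇑e ∘ (⇑e.symm ∘ ⇑ee.symm) ∘ _root_.id) = ⇑ee.symm := by
      funext x; simp
    have hfun2 : (⇑e ∘ _root_.id ∘ ⇑e.symm ∘ ⇑ee.symm) = ⇑ee.symm := by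
      funext x; simp
    rw [hc]
    simp only [Equiv.coe_trans]
    rw [hfun1, hfun2]
  -- norm bound on R
  have hWn : ‖W‖ ≤ 1 := myNormLeOne₂ W (by
    rw [← Matrix.star_eq_conjTranspose]; exact hW1)
  have hWsn : ‖star W‖ ≤ 1 := by
    rw [Matrix.star_eq_conjTranspose, Matrix.l2_opNorm_conjTranspose]
    exact hWn
  have hRk : ‖R‖ ≤ k := by
    calc ‖R‖ ≤ ‖M‖ := by rw [hR]; exact myNorm_toBlocks₁₂_le M
      _ = ‖N‖ := by rw [hM]; exact myNorm_submatrix_equiv N e.symm e.symm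
      _ ≤ ‖Q‖ := by rw [hN]; exact myNorm_mul_mul_le W Q (star W) hWn hWsn
      _ ≤ k := hQk
  -- part 2 data
  set Bm : Matrix (Fin m) (Fin m) ℂ :=
    (Matrix.fromBlocks 1 R 0 0).submatrix ⇑ee.symm ⇑ee.symm with hBm
  set Xm : Matrix (Fin m) (Fin m) ℂ :=
    (Matrix.fromBlocks 1 R 0 1).submatrix ⇑ee.symm ⇑ee.symm with hXm
  set Ym : Matrix (Fin m) (Fin m) ℂ :=
    (Matrix.fromBlocks 1 (-R) 0 1).submatrix ⇑ee.symm ⇑ee.symm with hYm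
  have hXY : Xm * Ym = 1 := by
    rw [hXm, hYm, Matrix.submatrix_mul_equiv, Matrix.fromBlocks_multiply]
    simp
  have hYX : Ym * Xm = 1 := by
    rw [hXm, hYm, Matrix.submatrix_mul_equiv, Matrix.fromBlocks_multiply]
    simp
  set X : (Matrix (Fin m) (Fin m) ℂ)ˣ :=
    ⟨Xm * U, star U * Ym,
      by rw [show (Xm * U) * (star U * Ym) = Xm * (U * star U) * Ym from by
            simp only [mul_assoc], hU1, mul_one, hXY],
      by rw [show (star U * Ym) * (Xm * U) = star U * (Ym * Xm) * U from by
            simp only [mul_assoc], hYX, mul_one, hU2]⟩ with hX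
  have hXcoe : (X : Matrix (Fin m) (Fin m) ℂ) = Xm * U := rfl
  have hXinv : ((X⁻¹ : (Matrix (Fin m) (Fin m) ℂ)ˣ) : Matrix (Fin m) (Fin m) ℂ)
      = star U * Ym := rfl
  have hUn : ‖U‖ ≤ 1 := myNormLeOne₂ U (by
    rw [← Matrix.star_eq_conjTranspose]; exact hU1)
  have hUsn : ‖star U‖ ≤ 1 := by
    rw [Matrix.star_eq_conjTranspose, Matrix.l2_opNorm_conjTranspose]
    exact hUn
  have hblock_norm : ∀ R' : Matrix (Fin r) (Fin (m - r)) ℂ, ‖R'‖ ≤ k →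
      ‖(Matrix.fromBlocks 1 R' 0 1 :
          Matrix (Fin r ⊕ Fin (m - r)) (Fin r ⊕ Fin (m - r)) ℂ)‖ ≤ 1 + k := by
    intro R' hR'
    have hsplit : (Matrix.fromBlocks 1 R' 0 1 :
        Matrix (Fin r ⊕ Fin (m - r)) (Fin r ⊕ Fin (m - r)) ℂ)
        = 1 + Matrix.fromBlocks 0 R' 0 0 := by
      rw [← Matrix.fromBlocks_one, Matrix.fromBlocks_add]
      simp
    rw [hsplit]
    calc ‖(1 : Matrix (Fin r ⊕ Fin (m - r)) (Fin r ⊕ Fin (m - r)) ℂ) +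
            Matrix.fromBlocks 0 R' 0 0‖
        ≤ ‖(1 : Matrix (Fin r ⊕ Fin (m - r)) (Fin r ⊕ Fin (m - r)) ℂ)‖ +
            ‖(Matrix.fromBlocks 0 R' 0 0 :
              Matrix (Fin r ⊕ Fin (m - r)) (Fin r ⊕ Fin (m - r)) ℂ)‖ := norm_add_le _ _
      _ ≤ 1 + ‖R'‖ := add_le_add myNormOneLe (myNorm_fromBlocks_le R')
      _ ≤ 1 + k := by linarith
  have hXmn : ‖Xm‖ ≤ 1 + k := by
    rw [hXm, myNorm_submatrix_equiv _ ee.symm ee.symm]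
    exact hblock_norm R hRk
  have hYmn : ‖Ym‖ ≤ 1 + k := by
    rw [hYm, myNorm_submatrix_equiv _ ee.symm ee.symm]
    exact hblock_norm (-R) (by rwa [norm_neg])
  -- the conjugated projection
  set Pm : Matrix (Fin m) (Fin m) ℂ :=
    (Matrix.fromBlocks (1 : Matrix (Fin r) (Fin r) ℂ) 0 0 0).submatrix ⇑ee.symm ⇑ee.symm
    with hPm
  have hXQX : (Xm * U) * Q * (star U * Ym) = Pm := by
    rw [show (Xm * U) * Q * (star U * Ym) = Xm * (U * Q * star U) * Ym from by
      simp only [mul_assoc], hUQ]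
    rw [hXm, hBm, Matrix.submatrix_mul_equiv, hYm, Matrix.submatrix_mul_equiv, hPm]
    congr 1
    rw [Matrix.fromBlocks_multiply, Matrix.fromBlocks_multiply]
    simp
  have hPmP : Pm * Pm = Pm := by
    rw [hPm, Matrix.submatrix_mul_equiv]
    congr 1
    rw [Matrix.fromBlocks_multiply]
    simp
  have hPmS : star Pm = Pm := by
    rw [hPm, Matrix.star_eq_conjTranspose, Matrix.conjTranspose_submatrix,
      Matrix.fromBlocks_conjTranspose]
    simp
  constructor
  · exact ⟨r, hr, U, hUmem, R, hRk, by rw [hUQ, Matrix.reindex_apply]⟩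
  · refine ⟨X, ?_, ?_, ?_, ?_⟩
    · rw [hXcoe]
      calc ‖Xm * U‖ ≤ ‖Xm‖ * ‖U‖ := Matrix.l2_opNorm_mul Xm U
        _ ≤ ‖Xm‖ := mul_le_of_le_one_right (norm_nonneg _) hUn
        _ ≤ 1 + k := hXmn
    · rw [hXinv]
      calc ‖star U * Ym‖ ≤ ‖star U‖ * ‖Ym‖ := Matrix.l2_opNorm_mul _ _
        _ ≤ ‖Ym‖ := mul_le_of_le_one_left (norm_nonneg _) hUsn
        _ ≤ 1 + k := hYmn
    · rw [hXcoe, hXinv, hXQX]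
      exact hPmP
    · rw [hXcoe, hXinv, hXQX]
      exact hPmS
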